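/- Let k ≥ 1 be an integer, F a field, S_1,…,S_k finite nonempty subsets of ℤ, and c : S_1 × ⋯ × S_k → F a nonzero coefficient array with support Γ. Then for every ε > 0 one has sliceRank(c^{⊗n}) ≤ exp((H(Γ) + ε)·n) for all sufficiently large n. -/

import Mathlib

open scoped BigOperators
open Classical

noncomputable section

namespace SlicePaper

/-- Shannon entropy of the `i`-th coordinate marginal of a distribution `p` on `Δ`. -/
def margEnt {ι : Type*} [Fintype ι] (Δ : Finset (ι → ℤ)) (p : (ι → ℤ) → ℝ) (i : ι) : ℝ :=
  -∑ α ∈ Δ.image (fun γ => γ i),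
      (∑ γ ∈ Δ.filter (fun γ => γ i = α), p γ) *
        Real.log (∑ γ ∈ Δ.filter (fun γ => γ i = α), p γ)

/-- The entropy `H(Δ)` of a finite set of integer tuples. -/
def HSet {ι : Type*} [Fintype ι] (Δ : Finset (ι → ℤ)) : ℝ :=
  sSup {e : ℝ | ∃ p : (ι → ℤ) → ℝ, (∀ γ, 0 ≤ p γ) ∧ (∀ γ, p γ ≠ 0 → γ ∈ Δ) ∧
    (∑ γ ∈ Δ, p γ) = 1 ∧ e = ⨅ i, margEnt Δ p i}

/-- Maximal elements of `Δ` w.r.t. the product of the linear orders `σ i`. -/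
def maxElems {ι : Type*} [Fintype ι] (σ : ι → LinearOrder ℤ) (Δ : Finset (ι → ℤ)) :
    Finset (ι → ℤ) :=
  Δ.filter (fun γ => ∀ δ ∈ Δ, (∀ i, (σ i).le (γ i) (δ i)) → γ = δ)

/-- `ξ k = log (k / (k-1)^((k-1)/k))`. -/
def xi (k : ℕ) : ℝ :=
  Real.log ((k : ℝ) / ((k : ℝ) - 1) ^ (((k : ℝ) - 1) / (k : ℝ)))

/-- Slice rank of a coefficient array `c`. -/
def sliceRank {k : ℕ} (F : Type*) [Field F] (τ : Fin k → Type*) [∀ i, Fintype (τ i)]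
    (c : (∀ i, τ i) → F) : ℕ :=
  sInf {r : ℕ | ∃ j : Fin r → Fin k, ∃ a : ∀ l : Fin r, τ (j l) → F,
    ∃ b : ∀ l : Fin r, (((i : {i : Fin k // i ≠ j l}) → τ i.1) → F),
    ∀ s : ∀ i, τ i, c s = ∑ l : Fin r, a l (s (j l)) * b l (fun i => s i.1)}

/-- `n`-th tensor power of a coefficient array. -/
def tpow {k : ℕ} {F : Type*} [Field F] {τ : Fin k → Type*} (c : (∀ i, τ i) → F) (n : ℕ) :
    (∀ i, Fin n → τ i) → F :=
  fun u => ∏ m : Fin n, c (fun i => u i m)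

/-- Support of a coefficient array, as a finite set of integer tuples. -/
def support {k : ℕ} {F : Type*} [Field F] (S : Fin k → Finset ℤ)
    (c : (∀ i, {x : ℤ // x ∈ S i}) → F) : Finset (Fin k → ℤ) :=
  (Finset.univ.filter (fun s : ∀ i, {x : ℤ // x ∈ S i} => c s ≠ 0)).image
    (fun s i => (s i : ℤ))

/-- Section `Γ_I^x`: restrictions to coordinates outside `I` of the γ ∈ Γ agreeing with x on I. -/
def sect {k : ℕ} (Γ : Finset (Fin k → ℤ)) (I : Finset (Fin k)) (x : Fin k → ℤ) :
    Finset ({i : Fin k // i ∉ I} → ℤ) :=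
  (Γ.filter (fun γ => ∀ i ∈ I, γ i = x i)).image (fun γ i => γ i.1)

/-- Section along a single coordinate. -/
def sect1 {k : ℕ} (Γ : Finset (Fin k → ℤ)) (i : Fin k) (a : ℤ) :
    Finset ({j : Fin k // j ≠ i} → ℤ) :=
  (Γ.filter (fun γ => γ i = a)).image (fun γ j => γ j.1)

/-- Trifferent set of strings. -/
def trifferent {n : ℕ} {α : Type*} (A : Finset (Fin n → α)) : Prop :=
  ∀ x ∈ A, ∀ y ∈ A, ∀ z ∈ A, x ≠ y → y ≠ z → x ≠ z →
    ∃ i, x i ≠ y i ∧ y i ≠ z i ∧ x i ≠ z i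

/-- The cube root of unity `ω = e^{2πi/3}`. -/
def w : ℂ := Complex.exp (2 * Real.pi * Complex.I / 3)

/-- The tensor `f_{x,y}(z,t)` used for the trifference problem. -/
def f {n : ℕ} (x y z t : Fin n → ℂ) : ℂ :=
  ∏ i, (x i + y i + z i) * (x i + y i + t i)

/-- Monomial functions `g_{α,β}`. -/
def g {n : ℕ} (α β : Fin n → ℕ) : (Fin n → ℂ) × (Fin n → ℂ) → ℂ :=
  fun q => ∏ i, (q.1 i + q.2 i) ^ α i * (q.1 i * q.2 i) ^ β i



/-! ### Auxiliary lemmas -/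

section Aux

set_option linter.unusedSectionVars false

variable {k : ℕ} {F : Type*} [Field F] {τ : Fin k → Type*} [∀ i, Fintype (τ i)]

/-- reconstruction of a full tuple from coordinate `j` value and the rest -/
def recon (j : Fin k) (x : τ j) (y : (i : {i : Fin k // i ≠ j}) → τ i.1) : ∀ i, τ i :=
  fun i => if h : i = j then cast (congrArg τ h.symm) x else y ⟨i, h⟩

lemma recon_eq (j : Fin k) (s : ∀ i, τ i) :
    recon j (s j) (fun i => s i.1) = s := by
  funext i
  by_cases h : i = j
  · subst h; simp [recon]
  · simp [recon, h]

lemma sliceRank_le_of_classify (d : (∀ i, τ i) → F) (J : (∀ i, τ i) → Fin k) :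
    sliceRank F τ d ≤
      ∑ j : Fin k, ((Finset.univ.filter (fun s : ∀ i, τ i => d s ≠ 0 ∧ J s = j)).image
        (fun s => s j)).card := by
  classical
  set A : ∀ j : Fin k, Finset (τ j) := fun j =>
    ((Finset.univ.filter (fun s : ∀ i, τ i => d s ≠ 0 ∧ J s = j)).image (fun s => s j)) with hA
  set r : ℕ := ∑ j : Fin k, (A j).card with hr
  apply Nat.sInf_le
  have hcard : Fintype.card (Σ j : Fin k, {x // x ∈ A j}) = r := by
    simp [Fintype.card_sigma, hr]
  let e : Fin r ≃ Σ j : Fin k, {x // x ∈ A j} :=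
    (Fintype.equivFinOfCardEq hcard).symm
  refine ⟨fun l => (e l).1, fun l t => if t = (e l).2.1 then 1 else 0,
    fun l y => if J (recon (e l).1 (e l).2.1 y) = (e l).1
      then d (recon (e l).1 (e l).2.1 y) else 0, ?_⟩
  intro s
  have key : ∀ p : Σ j : Fin k, {x // x ∈ A j},
      (if s p.1 = p.2.1 then (1:F) else 0) *
        (if J (recon p.1 p.2.1 (fun i => s i.1)) = p.1
          then d (recon p.1 p.2.1 (fun i => s i.1)) else 0)
      = if s p.1 = p.2.1 ∧ J s = p.1 then d s else 0 := by
    rintro ⟨j, x, hx⟩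
    by_cases h1 : s j = x
    · subst h1
      rw [recon_eq]
      simp
    · simp [h1]
  calc d s = ∑ p : Σ j : Fin k, {x // x ∈ A j},
      (if s p.1 = p.2.1 ∧ J s = p.1 then d s else 0) := by
        by_cases hd : d s = 0
        · rw [hd]; symm
          refine Finset.sum_eq_zero ?_
          rintro ⟨j, x, hx⟩ _
          simp
        · rw [← Finset.univ_sigma_univ, Finset.sum_sigma]
          have hmem : s (J s) ∈ A (J s) := by
            apply Finset.mem_image_of_mem
            simp [hd]
          rw [Finset.sum_eq_single (J s)]
          · rw [Finset.univ_eq_attach,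
              Finset.sum_attach (A (J s)) (fun x => if s (J s) = x ∧ J s = J s then d s else 0)]
            simp only [and_true]
            rw [Finset.sum_ite_eq (A (J s)) (s (J s)) (fun _ => d s), if_pos hmem]
          · intro j _ hj
            refine Finset.sum_eq_zero ?_
            rintro ⟨x, hx⟩ _
            simp [Ne.symm hj]
          · intro h; exact absurd (Finset.mem_univ _) h
    _ = ∑ l : Fin r, _ := by
        rw [← Equiv.sum_comp e (fun p => if s p.1 = p.2.1 ∧ J s = p.1 then d s else 0)]
        exact Finset.sum_congr rfl fun l _ => (key (e l)).symm

end Aux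

section Counting

lemma count_strings_le {α : Type*} [Fintype α] [DecidableEq α] {n : ℕ} (hn : 0 < n)
    (v : α → ℕ) (hv : ∑ a, v a = n) :
    (((Finset.univ : Finset (Fin n → α)).filter
        (fun x => ∀ a, (Finset.univ.filter (fun m => x m = a)).card = v a)).card : ℝ)
      ≤ Real.exp (-(∑ a, ((v a : ℝ)/n) * Real.log ((v a : ℝ)/n)) * n) := by
  set w : α → ℝ := fun a => (v a : ℝ)/n with hw
  have hn' : (0:ℝ) < n := by exact_mod_cast hn
  have hw0 : ∀ a, 0 ≤ w a := fun a => by positivity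
  have hw1 : ∑ a, w a = 1 := by
    rw [hw]; rw [← Finset.sum_div]
    rw [show ∑ a, ((v a : ℝ)) = (n:ℝ) by exact_mod_cast congrArg Nat.cast hv]
    field_simp
  set E : ℝ := ∑ a, w a * Real.log (w a) with hE
  have key : ∀ x ∈ (Finset.univ : Finset (Fin n → α)).filter
        (fun x => ∀ a, (Finset.univ.filter (fun m => x m = a)).card = v a),
      ∏ m, w (x m) = Real.exp (E * n) := by
    intro x hx
    rw [Finset.mem_filter] at hx
    have hcnt := hx.2
    have h1 : ∏ m, w (x m) = ∏ a, (w a) ^ (v a) := by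
      rw [← Finset.prod_fiberwise_of_maps_to (fun m _ => Finset.mem_univ (x m))
        (fun m => w (x m))]
      refine Finset.prod_congr rfl fun a _ => ?_
      have hc : ∀ m ∈ Finset.univ.filter (fun m => x m = a), w (x m) = w a := by
        intro m hm; rw [Finset.mem_filter] at hm; rw [hm.2]
      rw [Finset.prod_congr rfl hc, Finset.prod_const, hcnt a]
    rw [h1]
    have h2 : ∀ a, (w a) ^ (v a) = Real.exp ((v a : ℝ) * Real.log (w a)) := by
      intro a
      rcases Nat.eq_zero_or_pos (v a) with h | h
      · simp [h]
      · have hwa : 0 < w a := by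
          rw [hw]; positivity
        rw [← Real.exp_log hwa, ← Real.exp_nat_mul, Real.exp_log hwa]
    rw [Finset.prod_congr rfl (fun a _ => h2 a), ← Real.exp_sum]
    congr 1
    rw [hE, Finset.sum_mul]
    refine Finset.sum_congr rfl fun a _ => ?_
    rw [hw]
    field_simp
  have total : ∑ x : Fin n → α, ∏ m, w (x m) = 1 := by
    rw [← Fintype.piFinset_univ, ← Finset.prod_univ_sum]
    rw [Finset.prod_congr rfl fun (m : Fin n) _ => hw1, Finset.prod_const, one_pow]
  have hle : ((Finset.univ.filter (fun x : Fin n → α =>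
        ∀ a, (Finset.univ.filter (fun m => x m = a)).card = v a)).card : ℝ) * Real.exp (E * n)
      ≤ 1 := by
    rw [← nsmul_eq_mul, ← Finset.sum_const, ← total, ← Finset.sum_congr rfl key]
    exact Finset.sum_le_sum_of_subset_of_nonneg (Finset.subset_univ _)
        (fun x _ _ => Finset.prod_nonneg fun m _ => hw0 _)
  have hexp : (0:ℝ) < Real.exp (E * n) := Real.exp_pos _
  have hfin : ((Finset.univ.filter (fun x : Fin n → α =>
        ∀ a, (Finset.univ.filter (fun m => x m = a)).card = v a)).card : ℝ)
      ≤ Real.exp (-(E * n)) := by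
    have h3 : ((Finset.univ.filter (fun x : Fin n → α =>
        ∀ a, (Finset.univ.filter (fun m => x m = a)).card = v a)).card : ℝ)
        = (((Finset.univ.filter (fun x : Fin n → α =>
        ∀ a, (Finset.univ.filter (fun m => x m = a)).card = v a)).card : ℝ)
          * Real.exp (E * n)) * Real.exp (-(E * n)) := by
      rw [mul_assoc, ← Real.exp_add]; simp
    rw [h3]
    calc _ ≤ 1 * Real.exp (-(E * n)) :=
          mul_le_mul_of_nonneg_right hle (le_of_lt (Real.exp_pos _))
      _ = Real.exp (-(E * n)) := one_mul _
  calc ((Finset.univ.filter (fun x : Fin n → α =>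
        ∀ a, (Finset.univ.filter (fun m => x m = a)).card = v a)).card : ℝ)
      ≤ Real.exp (-(E * n)) := hfin
    _ = Real.exp (-(∑ a, ((v a : ℝ)/n) * Real.log ((v a : ℝ)/n)) * n) := by
        rw [hE]; simp only [hw]; congr 1; ring

end Counting

section Entropy

/-- `-q log q ≤ 1` for `0 ≤ q ≤ 1`. -/
lemma neg_mul_log_le_one {q : ℝ} (h0 : 0 ≤ q) (h1 : q ≤ 1) : -(q * Real.log q) ≤ 1 := by
  rcases eq_or_lt_of_le h0 with h | h
  · simp [← h]
  · have h2 : Real.log q⁻¹ ≤ q⁻¹ - 1 := Real.log_le_sub_one_of_pos (by positivity)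
    have hlog : -Real.log q ≤ q⁻¹ - 1 := by rwa [Real.log_inv] at h2
    calc -(q * Real.log q) = q * (-Real.log q) := by ring
      _ ≤ q * (q⁻¹ - 1) := mul_le_mul_of_nonneg_left hlog h0
      _ = 1 - q := by field_simp
      _ ≤ 1 := by linarith

set_option linter.unusedSectionVars false

variable {ι : Type*} [Fintype ι] [Nonempty ι]

lemma margEnt_le_card (Δ : Finset (ι → ℤ)) (p : (ι → ℤ) → ℝ)
    (hp0 : ∀ γ, 0 ≤ p γ) (hp1 : (∑ γ ∈ Δ, p γ) = 1) (i : ι) :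
    margEnt Δ p i ≤ Δ.card := by
  have hterm : ∀ α ∈ Δ.image (fun γ => γ i),
      -((∑ γ ∈ Δ.filter (fun γ => γ i = α), p γ) *
        Real.log (∑ γ ∈ Δ.filter (fun γ => γ i = α), p γ)) ≤ 1 := by
    intro α _
    apply neg_mul_log_le_one
    · exact Finset.sum_nonneg fun γ _ => hp0 γ
    · rw [← hp1]
      exact Finset.sum_le_sum_of_subset_of_nonneg (Finset.filter_subset _ _)
        (fun γ _ _ => hp0 γ)
  calc margEnt Δ p i = ∑ α ∈ Δ.image (fun γ => γ i),
        -((∑ γ ∈ Δ.filter (fun γ => γ i = α), p γ) *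
          Real.log (∑ γ ∈ Δ.filter (fun γ => γ i = α), p γ)) := by
        rw [margEnt, ← Finset.sum_neg_distrib]
    _ ≤ ∑ _α ∈ Δ.image (fun γ => γ i), (1:ℝ) := Finset.sum_le_sum hterm
    _ = (Δ.image (fun γ => γ i)).card := by rw [Finset.sum_const]; simp
    _ ≤ Δ.card := by exact_mod_cast Finset.card_image_le

lemma hset_bddAbove (Δ : Finset (ι → ℤ)) :
    BddAbove {e : ℝ | ∃ p : (ι → ℤ) → ℝ, (∀ γ, 0 ≤ p γ) ∧ (∀ γ, p γ ≠ 0 → γ ∈ Δ) ∧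
      (∑ γ ∈ Δ, p γ) = 1 ∧ e = ⨅ i, margEnt Δ p i} := by
  refine ⟨Δ.card, ?_⟩
  rintro e ⟨p, hp0, _, hp1, rfl⟩
  obtain ⟨i0⟩ := ‹Nonempty ι›
  calc ⨅ i, margEnt Δ p i ≤ margEnt Δ p i0 :=
        ciInf_le (Set.Finite.bddBelow (Set.finite_range _)) i0
    _ ≤ Δ.card := margEnt_le_card Δ p hp0 hp1 i0

/-- Any admissible distribution bounds `HSet` from below via its min marginal entropy. -/
lemma le_hset (Δ : Finset (ι → ℤ)) (p : (ι → ℤ) → ℝ)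
    (hp0 : ∀ γ, 0 ≤ p γ) (hpsupp : ∀ γ, p γ ≠ 0 → γ ∈ Δ) (hp1 : (∑ γ ∈ Δ, p γ) = 1) :
    (⨅ i, margEnt Δ p i) ≤ HSet Δ :=
  le_csSup (hset_bddAbove Δ) ⟨p, hp0, hpsupp, hp1, rfl⟩

end Entropy

section Strings

variable {k : ℕ} (S : Fin k → Finset ℤ)

/-- The `m`-th column of `u`, as an integer tuple. -/
def col {n : ℕ} (u : ∀ i, Fin n → {x : ℤ // x ∈ S i}) (m : Fin n) : Fin k → ℤ :=
  fun i => (u i m : ℤ)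

/-- Empirical distribution of the columns of `u`. -/
def emp {n : ℕ} (u : ∀ i, Fin n → {x : ℤ // x ∈ S i}) : (Fin k → ℤ) → ℝ :=
  fun γ => ((Finset.univ.filter (fun m => col S u m = γ)).card : ℝ) / n

/-- Empirical entropy of a string. -/
def entStr {n : ℕ} (j : Fin k) (x : Fin n → {z : ℤ // z ∈ S j}) : ℝ :=
  -∑ a : {z : ℤ // z ∈ S j},
    (((Finset.univ.filter (fun m => x m = a)).card : ℝ)/n) *
      Real.log (((Finset.univ.filter (fun m => x m = a)).card : ℝ)/n)

variable {F : Type*} [Field F] (c : (∀ i, {x : ℤ // x ∈ S i}) → F)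

lemma col_mem_support {n : ℕ} {u : ∀ i, Fin n → {x : ℤ // x ∈ S i}}
    (hu : tpow c n u ≠ 0) (m : Fin n) : col S u m ∈ support S c := by
  rw [tpow, Finset.prod_ne_zero_iff] at hu
  exact Finset.mem_image_of_mem _ (by simp [hu m (Finset.mem_univ m)])

lemma emp_admissible {n : ℕ} (hn : 0 < n) {u : ∀ i, Fin n → {x : ℤ // x ∈ S i}}
    (hu : tpow c n u ≠ 0) :
    (∀ γ, 0 ≤ emp S u γ) ∧ (∀ γ, emp S u γ ≠ 0 → γ ∈ support S c) ∧
      (∑ γ ∈ support S c, emp S u γ) = 1 := by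
  have hn' : (0:ℝ) < n := by exact_mod_cast hn
  refine ⟨fun γ => by rw [emp]; positivity, ?_, ?_⟩
  · intro γ hγ
    rw [emp] at hγ
    have : (Finset.univ.filter (fun m => col S u m = γ)).Nonempty := by
      rw [Finset.nonempty_iff_ne_empty]
      intro h
      rw [h] at hγ
      simp at hγ
    obtain ⟨m, hm⟩ := this
    rw [Finset.mem_filter] at hm
    rw [← hm.2]
    exact col_mem_support S c hu m
  · have hfib := Finset.card_eq_sum_card_fiberwise
      (f := col S u) (s := Finset.univ) (t := support S c)
      (fun m _ => col_mem_support S c hu m)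
    simp only [emp, ← Finset.sum_div]
    rw [← Nat.cast_sum, ← hfib]
    rw [Finset.card_univ, Fintype.card_fin]
    exact div_self (ne_of_gt hn')

/-- For `u` in the support of the tensor power, the `j`-th marginal entropy of the
empirical distribution equals the empirical entropy of the string `u j`. -/
lemma margEnt_emp_eq_entStr {n : ℕ} (hn : 0 < n) {u : ∀ i, Fin n → {x : ℤ // x ∈ S i}}
    (hu : tpow c n u ≠ 0) (j : Fin k) :
    margEnt (support S c) (emp S u) j = entStr S j (u j) := by
  have hn' : (0:ℝ) < n := by exact_mod_cast hn
  set Γ := support S c with hΓ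
  -- the marginal mass at α equals the counting fraction
  have hq : ∀ α : ℤ, (∑ γ ∈ Γ.filter (fun γ => γ j = α), emp S u γ)
      = ((Finset.univ.filter (fun m => ((u j m : ℤ)) = α)).card : ℝ)/n := by
    intro α
    have hmaps : ∀ m ∈ Finset.univ.filter (fun m => ((u j m : ℤ)) = α),
        col S u m ∈ Γ.filter (fun γ => γ j = α) := by
      intro m hm
      rw [Finset.mem_filter] at hm ⊢
      exact ⟨col_mem_support S c hu m, hm.2⟩
    have hfib := Finset.card_eq_sum_card_fiberwise hmaps
    have hfib2 : ∀ γ ∈ Γ.filter (fun γ => γ j = α),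
        ((Finset.univ.filter (fun m => ((u j m : ℤ)) = α)).filter
          (fun m => col S u m = γ)) = Finset.univ.filter (fun m => col S u m = γ) := by
      intro γ hγ
      rw [Finset.mem_filter] at hγ
      ext m
      simp only [Finset.mem_filter, Finset.mem_univ, true_and]
      constructor
      · exact fun h => h.2
      · intro h
        refine ⟨?_, h⟩
        rw [show ((u j m : ℤ)) = col S u m j from rfl, h, hγ.2]
    rw [Finset.sum_congr rfl (fun γ hγ => by rw [emp])]
    rw [← Finset.sum_div]
    congr 1
    rw [hfib, Nat.cast_sum]
    refine Finset.sum_congr rfl fun γ hγ => ?_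
    rw [← hfib2 γ hγ]
  -- the index sets agree up to vanishing terms
  have hsub : Γ.image (fun γ => γ j) ⊆ S j := by
    intro α hα
    rw [Finset.mem_image] at hα
    obtain ⟨γ, hγ, rfl⟩ := hα
    rw [hΓ, support, Finset.mem_image] at hγ
    obtain ⟨s, _, rfl⟩ := hγ
    exact (s j).2
  have hvanish : ∀ α ∈ S j, α ∉ Γ.image (fun γ => γ j) →
      (∑ γ ∈ Γ.filter (fun γ => γ j = α), emp S u γ) *
        Real.log (∑ γ ∈ Γ.filter (fun γ => γ j = α), emp S u γ) = 0 := by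
    intro α _ hα
    have : Γ.filter (fun γ => γ j = α) = ∅ := by
      rw [Finset.filter_eq_empty_iff]
      intro γ hγ h
      exact hα (Finset.mem_image.mpr ⟨γ, hγ, h⟩)
    rw [this]
    simp
  rw [margEnt, Finset.sum_subset hsub hvanish]
  -- pass to the subtype sum
  rw [entStr]
  congr 1
  rw [Finset.sum_congr rfl (fun α (hα : α ∈ S j) => by rw [hq α])]
  rw [← Finset.sum_coe_sort (S j) (fun α =>
    (((Finset.univ.filter (fun m => ((u j m : ℤ)) = α)).card : ℝ)/n) *
      Real.log (((Finset.univ.filter (fun m => ((u j m : ℤ)) = α)).card : ℝ)/n))]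
  refine Finset.sum_congr rfl fun a _ => ?_
  have hfeq : Finset.univ.filter (fun m => ((u j m : ℤ)) = (a : ℤ))
      = Finset.univ.filter (fun m => u j m = a) := by
    apply Finset.filter_congr
    intro m _
    exact Subtype.ext_iff.symm
  rw [hfeq]

end Strings


section BsetBound

/-- Strings of empirical entropy at most `H` number at most `(n+1)^|S j| e^{Hn}`. -/
lemma bset_card_le {k : ℕ} (S : Fin k → Finset ℤ) {n : ℕ} (hn : 0 < n) (j : Fin k) (H : ℝ) :
    (((Finset.univ : Finset (Fin n → {z : ℤ // z ∈ S j})).filter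
        (fun x => entStr S j x ≤ H)).card : ℝ)
      ≤ ((n:ℝ)+1)^((S j).card) * Real.exp (H * n) := by
  classical
  set B := (Finset.univ : Finset (Fin n → {z : ℤ // z ∈ S j})).filter
      (fun x => entStr S j x ≤ H) with hB
  set cv : (Fin n → {z : ℤ // z ∈ S j}) → ({z : ℤ // z ∈ S j} → ℕ) :=
      fun x a => (Finset.univ.filter (fun m => x m = a)).card with hcv
  have hcv_sum : ∀ x : Fin n → {z : ℤ // z ∈ S j}, ∑ a, cv x a = n := by
    intro x
    have := Finset.card_eq_sum_card_fiberwise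
      (f := x) (s := Finset.univ) (t := Finset.univ) (fun m _ => Finset.mem_univ (x m))
    rw [Finset.card_univ, Fintype.card_fin] at this
    exact this.symm
  have hfib := Finset.card_eq_sum_card_fiberwise
    (f := cv) (s := B) (t := B.image cv) (fun x hx => Finset.mem_image_of_mem _ hx)
  have hfiber : ∀ v ∈ B.image cv,
      ((B.filter (fun x => cv x = v)).card : ℝ) ≤ Real.exp (H * n) := by
    intro v hv
    obtain ⟨x0, hx0B, hx0⟩ := Finset.mem_image.mp hv
    have hx0H : entStr S j x0 ≤ H := (Finset.mem_filter.mp hx0B).2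
    have hsubC : B.filter (fun x => cv x = v) ⊆ Finset.univ.filter
        (fun x : Fin n → {z : ℤ // z ∈ S j} =>
          ∀ a, (Finset.univ.filter (fun m => x m = a)).card = v a) := by
      intro x hx
      rw [Finset.mem_filter] at hx ⊢
      exact ⟨Finset.mem_univ _, fun a => by rw [← hx.2]⟩
    have hvsum : ∑ a, v a = n := by rw [← hx0]; exact hcv_sum x0
    calc ((B.filter (fun x => cv x = v)).card : ℝ)
        ≤ ((Finset.univ.filter (fun x : Fin n → {z : ℤ // z ∈ S j} =>
            ∀ a, (Finset.univ.filter (fun m => x m = a)).card = v a)).card : ℝ) := by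
          exact_mod_cast Finset.card_le_card hsubC
      _ ≤ Real.exp (-(∑ a, ((v a : ℝ)/n) * Real.log ((v a : ℝ)/n)) * n) :=
          count_strings_le hn v hvsum
      _ = Real.exp (entStr S j x0 * n) := by
          rw [← hx0, entStr]
      _ ≤ Real.exp (H * n) := by
          apply Real.exp_le_exp.mpr
          apply mul_le_mul_of_nonneg_right hx0H
          positivity
  have himg : ((B.image cv).card : ℝ) ≤ ((n:ℝ)+1)^((S j).card) := by
    have hinj : (B.image cv).card ≤ Fintype.card ({z : ℤ // z ∈ S j} → Fin (n+1)) := by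
      rw [← Finset.card_univ]
      apply Finset.card_le_card_of_injOn
        (fun v a => (⟨min (v a) n, by omega⟩ : Fin (n+1)))
      · intro v _; exact Finset.mem_univ _
      · intro v hv v' hv' hvv'
        have hble : ∀ (v : {z : ℤ // z ∈ S j} → ℕ), v ∈ B.image cv → ∀ a, v a ≤ n := by
          intro v hv a
          obtain ⟨x, _, rfl⟩ := Finset.mem_image.mp hv
          calc cv x a ≤ (Finset.univ : Finset (Fin n)).card := Finset.card_filter_le _ _
            _ = n := by rw [Finset.card_univ, Fintype.card_fin]
        funext a
        have h1 := congrFun hvv' a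
        have h2 : min (v a) n = min (v' a) n := congrArg Fin.val h1
        rw [min_eq_left (hble v hv a), min_eq_left (hble v' hv' a)] at h2
        exact h2
    calc ((B.image cv).card : ℝ) ≤ (Fintype.card ({z : ℤ // z ∈ S j} → Fin (n+1)) : ℝ) := by
          exact_mod_cast hinj
      _ = ((n:ℝ)+1)^((S j).card) := by
          rw [Fintype.card_fun, Fintype.card_fin, Fintype.card_coe]
          push_cast
          ring
  calc (B.card : ℝ) = ∑ v ∈ B.image cv, ((B.filter (fun x => cv x = v)).card : ℝ) := by
        rw [hfib]; push_cast; rfl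
    _ ≤ ∑ _v ∈ B.image cv, Real.exp (H * n) := Finset.sum_le_sum hfiber
    _ = ((B.image cv).card : ℝ) * Real.exp (H * n) := by
        rw [Finset.sum_const, nsmul_eq_mul]
    _ ≤ ((n:ℝ)+1)^((S j).card) * Real.exp (H * n) :=
        mul_le_mul_of_nonneg_right himg (le_of_lt (Real.exp_pos _))

end BsetBound


section Poly

/-- Eventually, `k (n+1)^M ≤ e^{ε n}`. -/
lemma eventually_poly_le_exp (k M : ℕ) {ε : ℝ} (hε : 0 < ε) :
    ∃ N : ℕ, ∀ n : ℕ, n ≥ N → (k : ℝ) * ((n:ℝ)+1)^M ≤ Real.exp (ε * n) := by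
  have h1 : Filter.Tendsto (fun x : ℝ => x ^ (M:ℝ) * Real.exp (-ε * x))
      Filter.atTop (nhds 0) := tendsto_rpow_mul_exp_neg_mul_atTop_nhds_zero M ε hε
  have h2 : Filter.Tendsto (fun n : ℕ => ((n:ℝ)+1)) Filter.atTop Filter.atTop :=
    Filter.tendsto_atTop_add_const_right _ 1 tendsto_natCast_atTop_atTop
  have h3 : Filter.Tendsto
      (fun n : ℕ => ((k:ℝ) * Real.exp ε) * (((n:ℝ)+1) ^ (M:ℝ) * Real.exp (-ε * ((n:ℝ)+1))))
      Filter.atTop (nhds (((k:ℝ) * Real.exp ε) * 0)) := (h1.comp h2).const_mul _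
  rw [mul_zero] at h3
  have h4 : ∀ᶠ n : ℕ in Filter.atTop,
      ((k:ℝ) * Real.exp ε) * (((n:ℝ)+1) ^ (M:ℝ) * Real.exp (-ε * ((n:ℝ)+1))) < 1 :=
    h3.eventually_lt_const one_pos
  obtain ⟨N, hN⟩ := Filter.eventually_atTop.mp h4
  refine ⟨N, fun n hn => ?_⟩
  have hNn := hN n hn
  have hpos : (0:ℝ) ≤ (n:ℝ)+1 := by positivity
  rw [Real.rpow_natCast] at hNn
  have hkey : ((k:ℝ) * ((n:ℝ)+1)^M) * Real.exp (-(ε * n)) < 1 := by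
    have heq : ((k:ℝ) * Real.exp ε) * (((n:ℝ)+1) ^ M * Real.exp (-ε * ((n:ℝ)+1)))
        = ((k:ℝ) * ((n:ℝ)+1)^M) * Real.exp (-(ε * n)) := by
      rw [show -ε * ((n:ℝ)+1) = -(ε * n) + (-ε) by ring, Real.exp_add]
      have hh : Real.exp ε * Real.exp (-ε) = 1 := by
        rw [← Real.exp_add]; simp
      linear_combination ((k:ℝ) * ((n:ℝ)+1)^M * Real.exp (-(ε * (n:ℝ)))) * hh
    rw [← heq]
    exact hNn
  have hexp : (0:ℝ) < Real.exp (-(ε * n)) := Real.exp_pos _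
  have := mul_le_mul_of_nonneg_right (le_of_lt hkey) (le_of_lt (Real.exp_pos (ε * n)))
  rw [one_mul, mul_assoc, ← Real.exp_add] at this
  simpa using this

end Poly

/-- Tao–Sawin upper bound: for nonzero `c` with support `Γ`,
`sliceRank(c^{⊗n}) ≤ exp((H(Γ) + ε) n)` eventually. -/
theorem stmt5 {k : ℕ} (hk : 1 ≤ k) (F : Type*) [Field F]
    (S : Fin k → Finset ℤ) (hS : ∀ i, (S i).Nonempty)
    (c : (∀ i, {x : ℤ // x ∈ S i}) → F) (hc : c ≠ 0) :
    ∀ ε : ℝ, 0 < ε → ∃ N : ℕ, ∀ n ≥ N,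
      (sliceRank F (fun i => Fin n → {x : ℤ // x ∈ S i}) (tpow c n) : ℝ) ≤
        Real.exp ((HSet (support S c) + ε) * n) := by
  intro ε hε
  classical
  haveI : Nonempty (Fin k) := ⟨⟨0, hk⟩⟩
  set Γ := support S c with hΓdef
  set M : ℕ := Finset.univ.sup (fun j : Fin k => (S j).card) with hM
  obtain ⟨N0, hN0⟩ := eventually_poly_le_exp k M hε
  refine ⟨max N0 1, fun n hn => ?_⟩
  have hn1 : 1 ≤ n := le_trans (le_max_right _ _) hn
  have hnN0 : n ≥ N0 := le_trans (le_max_left _ _) hn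
  have hnpos : 0 < n := hn1
  have hn' : (0:ℝ) < n := by exact_mod_cast hnpos
  -- the classification function: an index of minimal marginal entropy
  have hex : ∀ u : ∀ i, Fin n → {x : ℤ // x ∈ S i},
      ∃ i0 : Fin k, ∀ i : Fin k, margEnt Γ (emp S u) i0 ≤ margEnt Γ (emp S u) i := by
    intro u
    obtain ⟨i0, _, h⟩ := Finset.exists_min_image Finset.univ
      (fun i => margEnt Γ (emp S u) i) ⟨⟨0, hk⟩, Finset.mem_univ _⟩
    exact ⟨i0, fun i => h i (Finset.mem_univ i)⟩
  set J : (∀ i, Fin n → {x : ℤ // x ∈ S i}) → Fin k := fun u => (hex u).choose with hJ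
  have hJspec : ∀ u, ∀ i, margEnt Γ (emp S u) (J u) ≤ margEnt Γ (emp S u) i :=
    fun u => (hex u).choose_spec
  -- Step 1: classification bound on the slice rank
  have hstep1 := sliceRank_le_of_classify (tpow c n) J
  -- Step 2: the slices lie in low-entropy string sets
  have hAB : ∀ j : Fin k,
      ((Finset.univ.filter (fun s : ∀ i, Fin n → {x : ℤ // x ∈ S i} =>
          tpow c n s ≠ 0 ∧ J s = j)).image (fun s => s j))
        ⊆ (Finset.univ : Finset (Fin n → {z : ℤ // z ∈ S j})).filter
            (fun x => entStr S j x ≤ HSet Γ) := by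
    intro j x hx
    obtain ⟨u, hu, rfl⟩ := Finset.mem_image.mp hx
    rw [Finset.mem_filter] at hu
    obtain ⟨-, hune, hJu⟩ := hu
    rw [Finset.mem_filter]
    refine ⟨Finset.mem_univ _, ?_⟩
    obtain ⟨hp0, hpsupp, hp1⟩ := emp_admissible S c hnpos hune
    calc entStr S j (u j) = margEnt Γ (emp S u) j :=
          (margEnt_emp_eq_entStr S c hnpos hune j).symm
      _ = margEnt Γ (emp S u) (J u) := by rw [hJu]
      _ ≤ ⨅ i, margEnt Γ (emp S u) i := le_ciInf (hJspec u)
      _ ≤ HSet Γ := le_hset Γ (emp S u) hp0 hpsupp hp1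
  -- Step 3: assemble the numeric bound
  have hmain : (sliceRank F (fun i => Fin n → {x : ℤ // x ∈ S i}) (tpow c n) : ℝ)
      ≤ (k:ℝ) * ((n:ℝ)+1)^M * Real.exp (HSet Γ * n) := by
    calc (sliceRank F (fun i => Fin n → {x : ℤ // x ∈ S i}) (tpow c n) : ℝ)
        ≤ ((∑ j : Fin k, ((Finset.univ.filter (fun s : ∀ i, Fin n → {x : ℤ // x ∈ S i} =>
            tpow c n s ≠ 0 ∧ J s = j)).image (fun s => s j)).card : ℕ) : ℝ) := by
          have h2 : sliceRank F (fun i => Fin n → {x : ℤ // x ∈ S i}) (tpow c n) ≤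
              ∑ j : Fin k, ((Finset.univ.filter (fun s : ∀ i, Fin n → {x : ℤ // x ∈ S i} =>
                tpow c n s ≠ 0 ∧ J s = j)).image (fun s => s j)).card := by
            convert hstep1 using 2 with j
            congr!
          exact_mod_cast h2
      _ = ∑ j : Fin k, (((Finset.univ.filter (fun s : ∀ i, Fin n → {x : ℤ // x ∈ S i} =>
            tpow c n s ≠ 0 ∧ J s = j)).image (fun s => s j)).card : ℝ) := by push_cast; rfl
      _ ≤ ∑ j : Fin k, (((Finset.univ : Finset (Fin n → {z : ℤ // z ∈ S j})).filter
            (fun x => entStr S j x ≤ HSet Γ)).card : ℝ) := by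
          refine Finset.sum_le_sum fun j _ => ?_
          exact_mod_cast Finset.card_le_card (hAB j)
      _ ≤ ∑ j : Fin k, ((n:ℝ)+1)^((S j).card) * Real.exp (HSet Γ * n) :=
          Finset.sum_le_sum fun j _ => bset_card_le S hnpos j (HSet Γ)
      _ ≤ ∑ _j : Fin k, ((n:ℝ)+1)^M * Real.exp (HSet Γ * n) := by
          refine Finset.sum_le_sum fun j _ => ?_
          apply mul_le_mul_of_nonneg_right _ (le_of_lt (Real.exp_pos _))
          apply pow_le_pow_right₀ (by linarith)
          exact Finset.le_sup (f := fun j : Fin k => (S j).card) (Finset.mem_univ j)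
      _ = (k:ℝ) * ((n:ℝ)+1)^M * Real.exp (HSet Γ * n) := by
          rw [Finset.sum_const, Finset.card_univ, Fintype.card_fin, nsmul_eq_mul]
          ring
  calc (sliceRank F (fun i => Fin n → {x : ℤ // x ∈ S i}) (tpow c n) : ℝ)
      ≤ (k:ℝ) * ((n:ℝ)+1)^M * Real.exp (HSet Γ * n) := hmain
    _ ≤ Real.exp (ε * n) * Real.exp (HSet Γ * n) :=
        mul_le_mul_of_nonneg_right (hN0 n hnN0) (le_of_lt (Real.exp_pos _))
    _ = Real.exp ((HSet Γ + ε) * n) := by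
        rw [← Real.exp_add]; congr 1; ring


end SlicePaper
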